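/- If a theory T admits arbitrary cograph consistency-inconsistency patterns for φ(x,y), then for every d < ω, T has a (2, ω, ω)-weave for φ(x,y) of depth d; conversely, if T has (2, ω, ω)-weaves of arbitrary finite depth for φ(x,y), then T admits arbitrary cograph consistency-inconsistency patterns for φ(x,y). (Combinatorial core: the configuration indexed by (2²)^d with pairwise up-1-comb pairs inconsistent and wide-right-ω-combs consistent corresponds exactly to cograph patterns.) -/

import Mathlib

open FirstOrder

universe u v w

/-- The index square `2²`. -/
abbrev Sq : Type := Fin 2 × Fin 2

/-- `α` extends the partial function `τ` (defined on `{s | s < t}`) followed by the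
value `v` at `t`. -/
def ExtendsAt {d : ℕ} (α : Fin d → Sq) (t : Fin d) (τ : Fin d → Sq) (v : Sq) : Prop :=
  (∀ s, s < t → α s = τ s) ∧ α t = v

/-- `A` is narrowly below `B`. -/
def NarrowlyBelow {d : ℕ} (A B : Set (Fin d → Sq)) : Prop :=
  ∃ (t : Fin d) (τ : Fin d → Sq) (i : Fin 2),
    (∀ α ∈ A, ExtendsAt α t τ (i, 0)) ∧ (∀ β ∈ B, ExtendsAt β t τ (i, 1))

/-- `A` is narrowly to the left of `B`. -/
def NarrowlyLeft {d : ℕ} (A B : Set (Fin d → Sq)) : Prop :=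
  ∃ (t : Fin d) (τ : Fin d → Sq) (j : Fin 2),
    (∀ α ∈ A, ExtendsAt α t τ (0, j)) ∧ (∀ β ∈ B, ExtendsAt β t τ (1, j))

/-- Finite up-ω-combs. -/
inductive FinUpComb {d : ℕ} : Set (Fin d → Sq) → Prop
  | single (α : Fin d → Sq) : FinUpComb {α}
  | union {A B : Set (Fin d → Sq)} : FinUpComb A → FinUpComb B →
      NarrowlyBelow A B → FinUpComb (A ∪ B)

/-- Finite right-ω-combs. -/
inductive FinRightComb {d : ℕ} : Set (Fin d → Sq) → Prop
  | single (α : Fin d → Sq) : FinRightComb {α}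
  | union {A B : Set (Fin d → Sq)} : FinRightComb A → FinRightComb B →
      NarrowlyLeft A B → FinRightComb (A ∪ B)

/-- Auxiliary relation for the disjoint union of two graphs. -/
def sumRel {V W : Type} (G : SimpleGraph V) (H : SimpleGraph W) : V ⊕ W → V ⊕ W → Prop
  | .inl v, .inl v' => G.Adj v v'
  | .inr w, .inr w' => H.Adj w w'
  | _, _ => False

/-- Disjoint union (coproduct) of two simple graphs. -/
def sumGraph {V W : Type} (G : SimpleGraph V) (H : SimpleGraph W) : SimpleGraph (V ⊕ W) :=
  SimpleGraph.fromRel (sumRel G H)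

/-- Auxiliary relation for the join of two graphs. -/
def joinRel {V W : Type} (G : SimpleGraph V) (H : SimpleGraph W) : V ⊕ W → V ⊕ W → Prop
  | .inl v, .inl v' => G.Adj v v'
  | .inr w, .inr w' => H.Adj w w'
  | _, _ => True

/-- Graph join of two simple graphs: disjoint union plus all cross edges. -/
def joinGraph {V W : Type} (G : SimpleGraph V) (H : SimpleGraph W) : SimpleGraph (V ⊕ W) :=
  SimpleGraph.fromRel (joinRel G H)

/-- Cographs: the smallest class of graphs (up to isomorphism) containing the
one-vertex graph and closed under disjoint unions and graph joins. -/
inductive IsCograph : {V : Type} → SimpleGraph V → Prop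
  | single : IsCograph (⊥ : SimpleGraph PUnit)
  | iso {V W : Type} {G : SimpleGraph V} {H : SimpleGraph W} (e : G ≃g H) :
      IsCograph G → IsCograph H
  | coprod {V W : Type} {G : SimpleGraph V} {H : SimpleGraph W} :
      IsCograph G → IsCograph H → IsCograph (sumGraph G H)
  | join {V W : Type} {G : SimpleGraph V} {H : SimpleGraph W} :
      IsCograph G → IsCograph H → IsCograph (joinGraph G H)

section Aux

/-- `σ` is (as a singleton) narrowly below `τ`, in simplified form. -/
def Below {d : ℕ} (σ τ : Fin d → Sq) : Prop :=
  ∃ (t : Fin d) (i : Fin 2), (∀ s, s < t → σ s = τ s) ∧ σ t = (i, 0) ∧ τ t = (i, 1)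

/-- `σ` is (as a singleton) narrowly left of `τ`, in simplified form. -/
def LeftOf {d : ℕ} (σ τ : Fin d → Sq) : Prop :=
  ∃ (t : Fin d) (j : Fin 2), (∀ s, s < t → σ s = τ s) ∧ σ t = (0, j) ∧ τ t = (1, j)

lemma below_of_narrowlyBelow {d : ℕ} {A B : Set (Fin d → Sq)} (h : NarrowlyBelow A B)
    {σ τ : Fin d → Sq} (hσ : σ ∈ A) (hτ : τ ∈ B) : Below σ τ := by
  obtain ⟨t, τ₀, i, hA, hB⟩ := h
  obtain ⟨h1, h2⟩ := hA σ hσ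
  obtain ⟨h3, h4⟩ := hB τ hτ
  exact ⟨t, i, fun s hs => (h1 s hs).trans (h3 s hs).symm, h2, h4⟩

lemma leftOf_of_narrowlyLeft {d : ℕ} {A B : Set (Fin d → Sq)} (h : NarrowlyLeft A B)
    {σ τ : Fin d → Sq} (hσ : σ ∈ A) (hτ : τ ∈ B) : LeftOf σ τ := by
  obtain ⟨t, τ₀, j, hA, hB⟩ := h
  obtain ⟨h1, h2⟩ := hA σ hσ
  obtain ⟨h3, h4⟩ := hB τ hτ
  exact ⟨t, j, fun s hs => (h1 s hs).trans (h3 s hs).symm, h2, h4⟩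

lemma narrowlyBelow_of_below {d : ℕ} {σ τ : Fin d → Sq} (h : Below σ τ) :
    NarrowlyBelow {σ} {τ} := by
  obtain ⟨t, i, h1, h2, h3⟩ := h
  refine ⟨t, σ, i, ?_, ?_⟩
  · rintro α rfl; exact ⟨fun s _ => rfl, h2⟩
  · rintro β rfl; exact ⟨fun s hs => (h1 s hs).symm, h3⟩

lemma below_ne {d : ℕ} {σ τ : Fin d → Sq} (h : Below σ τ) : σ ≠ τ := by
  obtain ⟨t, i, _, h2, h3⟩ := h
  intro he
  rw [he, h3] at h2
  simp at h2

lemma not_below_of_leftOf {d : ℕ} {σ τ : Fin d → Sq} (h : LeftOf σ τ) :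
    ¬ Below σ τ ∧ ¬ Below τ σ := by
  obtain ⟨t, j, h1, h2, h3⟩ := h
  constructor
  · rintro ⟨t', i, g1, g2, g3⟩
    rcases lt_trichotomy t' t with hlt | rfl | hgt
    · rw [h1 t' hlt, g3] at g2; simp at g2
    · rw [h2] at g2; rw [h3] at g3
      obtain ⟨hi, _⟩ := Prod.mk.injEq .. ▸ g2
      obtain ⟨hi', _⟩ := Prod.mk.injEq .. ▸ g3
      rw [← hi] at hi'; simp at hi'
    · rw [g1 t hgt, h3] at h2; simp at h2
  · rintro ⟨t', i, g1, g2, g3⟩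
    rcases lt_trichotomy t' t with hlt | rfl | hgt
    · rw [← h1 t' hlt, g3] at g2; simp at g2
    · rw [h3] at g2; rw [h2] at g3
      obtain ⟨hi, _⟩ := Prod.mk.injEq .. ▸ g2
      obtain ⟨hi', _⟩ := Prod.mk.injEq .. ▸ g3
      rw [← hi] at hi'; simp at hi'
    · rw [← g1 t hgt, h3] at h2; simp at h2

lemma finUpComb_adj {d : ℕ} {C : Set (Fin d → Sq)} (h : FinUpComb C) :
    ∀ σ ∈ C, ∀ τ ∈ C, σ ≠ τ → Below σ τ ∨ Below τ σ := by
  induction h with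
  | single α => rintro σ rfl τ rfl hne; exact absurd rfl hne
  | union hA hB hAB ihA ihB =>
    rintro σ (hσ | hσ) τ (hτ | hτ) hne
    · exact ihA σ hσ τ hτ hne
    · exact Or.inl (below_of_narrowlyBelow hAB hσ hτ)
    · exact Or.inr (below_of_narrowlyBelow hAB hτ hσ)
    · exact ihB σ hσ τ hτ hne

lemma finRightComb_not_below {d : ℕ} {C : Set (Fin d → Sq)} (h : FinRightComb C) :
    ∀ σ ∈ C, ∀ τ ∈ C, ¬ Below σ τ := by
  induction h with
  | single α => rintro σ rfl τ rfl h; exact below_ne h rfl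
  | union hA hB hAB ihA ihB =>
    rintro σ (hσ | hσ) τ (hτ | hτ)
    · exact ihA σ hσ τ hτ
    · exact (not_below_of_leftOf (leftOf_of_narrowlyLeft hAB hσ hτ)).1
    · exact (not_below_of_leftOf (leftOf_of_narrowlyLeft hAB hτ hσ)).2
    · exact ihB σ hσ τ hτ

end Aux

section Cons

lemma below_cons_iff {d : ℕ} (u w : Sq) (σ τ : Fin d → Sq) :
    Below (Fin.cons u σ) (Fin.cons w τ) ↔
      (∃ i : Fin 2, u = (i, 0) ∧ w = (i, 1)) ∨ (u = w ∧ Below σ τ) := by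
  constructor
  · rintro ⟨t, i, h1, h2, h3⟩
    rcases Fin.eq_zero_or_eq_succ t with rfl | ⟨s, rfl⟩
    · left; exact ⟨i, by simpa using h2, by simpa using h3⟩
    · right
      refine ⟨by simpa using h1 0 (Fin.succ_pos s), s, i, ?_, by simpa using h2,
        by simpa using h3⟩
      intro s' hs'
      have := h1 s'.succ (by simpa using hs')
      simpa using this
  · rintro (⟨i, rfl, rfl⟩ | ⟨rfl, t, i, h1, h2, h3⟩)
    · exact ⟨0, i, fun s hs => absurd hs (Fin.not_lt_zero s), by simp, by simp⟩
    · refine ⟨t.succ, i, ?_, by simpa using h2, by simpa using h3⟩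
      intro s hs
      rcases Fin.eq_zero_or_eq_succ s with rfl | ⟨s', rfl⟩
      · simp
      · have : s' < t := by simpa using hs
        simpa using h1 s' this

lemma narrowlyLeft_image_cons {d : ℕ} (v : Sq) {A B : Set (Fin d → Sq)}
    (h : NarrowlyLeft A B) : NarrowlyLeft (Fin.cons v '' A) (Fin.cons v '' B) := by
  obtain ⟨t, τ, j, hA, hB⟩ := h
  refine ⟨t.succ, Fin.cons v τ, j, ?_, ?_⟩
  · rintro α ⟨a, ha, rfl⟩
    refine ⟨?_, by simpa using (hA a ha).2⟩
    intro s hs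
    rcases Fin.eq_zero_or_eq_succ s with rfl | ⟨s', rfl⟩
    · simp
    · have : s' < t := by simpa using hs
      simpa using (hA a ha).1 s' this
  · rintro β ⟨b, hb, rfl⟩
    refine ⟨?_, by simpa using (hB b hb).2⟩
    intro s hs
    rcases Fin.eq_zero_or_eq_succ s with rfl | ⟨s', rfl⟩
    · simp
    · have : s' < t := by simpa using hs
      simpa using (hB b hb).1 s' this

lemma finRightComb_image_cons {d : ℕ} (v : Sq) {C : Set (Fin d → Sq)}
    (h : FinRightComb C) : FinRightComb (Fin.cons v '' C) := by
  induction h with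
  | single α => rw [Set.image_singleton]; exact .single _
  | union hA hB hAB ihA ihB =>
    rw [Set.image_union]
    exact .union ihA ihB (narrowlyLeft_image_cons v hAB)

lemma narrowlyLeft_cons_cross {d : ℕ} (j : Fin 2) (A B : Set (Fin d → Sq)) :
    NarrowlyLeft (Fin.cons (0, j) '' A) (Fin.cons (1, j) '' B) := by
  refine ⟨0, fun _ => (0, 0), j, ?_, ?_⟩
  · rintro α ⟨a, ha, rfl⟩
    exact ⟨fun s hs => absurd hs (Fin.not_lt_zero s), by simp⟩
  · rintro β ⟨b, hb, rfl⟩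
    exact ⟨fun s hs => absurd hs (Fin.not_lt_zero s), by simp⟩

end Cons

section Graph

/-- The up-1-comb graph on `(2²)^d`. -/
def Gd (d : ℕ) : SimpleGraph (Fin d → Sq) where
  Adj σ τ := Below σ τ ∨ Below τ σ
  symm := ⟨fun σ τ h => h.symm⟩
  loopless := ⟨fun σ h => by rcases h with h | h <;> exact below_ne h rfl⟩

lemma gd_adj_cons {d : ℕ} (u w : Sq) (σ τ : Fin d → Sq) :
    (Gd (d+1)).Adj (Fin.cons u σ) (Fin.cons w τ) ↔
      (∃ i : Fin 2, u = (i, 0) ∧ w = (i, 1)) ∨ (∃ i : Fin 2, w = (i, 0) ∧ u = (i, 1)) ∨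
        (u = w ∧ (Gd d).Adj σ τ) := by
  show Below _ _ ∨ Below _ _ ↔ _
  rw [below_cons_iff, below_cons_iff]
  show _ ↔ _ ∨ _ ∨ (_ ∧ (Below σ τ ∨ Below τ σ))
  constructor
  · rintro ((h | ⟨rfl, h⟩) | (h | ⟨rfl, h⟩))
    · exact Or.inl h
    · exact Or.inr (Or.inr ⟨rfl, Or.inl h⟩)
    · exact Or.inr (Or.inl h)
    · exact Or.inr (Or.inr ⟨rfl, Or.inr h⟩)
  · rintro (h | h | ⟨rfl, (h | h)⟩)
    · exact Or.inl (Or.inl h)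
    · exact Or.inr (Or.inl h)
    · exact Or.inl (Or.inr ⟨rfl, h⟩)
    · exact Or.inr (Or.inr ⟨rfl, h⟩)

/-- The equivalence splitting `(2²)^{d+1}` into four copies of `(2²)^d`. -/
def quadEquiv (d : ℕ) :
    ((Fin d → Sq) ⊕ (Fin d → Sq)) ⊕ ((Fin d → Sq) ⊕ (Fin d → Sq)) ≃ (Fin (d+1) → Sq) where
  toFun x := match x with
    | .inl (.inl a) => Fin.cons (0, 0) a
    | .inl (.inr a) => Fin.cons (0, 1) a
    | .inr (.inl a) => Fin.cons (1, 0) a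
    | .inr (.inr a) => Fin.cons (1, 1) a
  invFun α :=
    if α 0 = (0, 0) then .inl (.inl (Fin.tail α))
    else if α 0 = (0, 1) then .inl (.inr (Fin.tail α))
    else if α 0 = (1, 0) then .inr (.inl (Fin.tail α))
    else .inr (.inr (Fin.tail α))
  left_inv x := by
    rcases x with (a | a) | (a | a) <;> simp +decide [Fin.tail_cons]
  right_inv α := by
    have key : ∀ p : Sq, p = (0,0) ∨ p = (0,1) ∨ p = (1,0) ∨ p = (1,1) := by decide
    obtain ⟨v, a, rfl⟩ : ∃ v a, α = Fin.cons v a :=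
      ⟨α 0, Fin.tail α, (Fin.cons_self_tail α).symm⟩
    rcases key v with rfl | rfl | rfl | rfl <;> simp +decide [Fin.tail_cons]

end Graph

section GraphAdj

lemma sumGraph_adj_ll {V W : Type} (G : SimpleGraph V) (H : SimpleGraph W) (a b : V) :
    (sumGraph G H).Adj (.inl a) (.inl b) ↔ G.Adj a b := by
  constructor
  · rintro ⟨hne, h | h⟩
    · exact h
    · exact h.symm
  · intro h
    exact ⟨by simp [h.ne], Or.inl h⟩

lemma sumGraph_adj_rr {V W : Type} (G : SimpleGraph V) (H : SimpleGraph W) (a b : W) :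
    (sumGraph G H).Adj (.inr a) (.inr b) ↔ H.Adj a b := by
  constructor
  · rintro ⟨hne, h | h⟩
    · exact h
    · exact h.symm
  · intro h
    exact ⟨by simp [h.ne], Or.inl h⟩

lemma sumGraph_adj_lr {V W : Type} (G : SimpleGraph V) (H : SimpleGraph W) (a : V) (b : W) :
    ¬ (sumGraph G H).Adj (.inl a) (.inr b) := by
  rintro ⟨hne, h | h⟩ <;> exact h

lemma sumGraph_adj_rl {V W : Type} (G : SimpleGraph V) (H : SimpleGraph W) (a : W) (b : V) :
    ¬ (sumGraph G H).Adj (.inr a) (.inl b) := by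
  rintro ⟨hne, h | h⟩ <;> exact h

lemma joinGraph_adj_ll {V W : Type} (G : SimpleGraph V) (H : SimpleGraph W) (a b : V) :
    (joinGraph G H).Adj (.inl a) (.inl b) ↔ G.Adj a b := by
  constructor
  · rintro ⟨hne, h | h⟩
    · exact h
    · exact h.symm
  · intro h
    exact ⟨by simp [h.ne], Or.inl h⟩

lemma joinGraph_adj_rr {V W : Type} (G : SimpleGraph V) (H : SimpleGraph W) (a b : W) :
    (joinGraph G H).Adj (.inr a) (.inr b) ↔ H.Adj a b := by
  constructor
  · rintro ⟨hne, h | h⟩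
    · exact h
    · exact h.symm
  · intro h
    exact ⟨by simp [h.ne], Or.inl h⟩

lemma joinGraph_adj_lr {V W : Type} (G : SimpleGraph V) (H : SimpleGraph W) (a : V) (b : W) :
    (joinGraph G H).Adj (.inl a) (.inr b) := ⟨by simp, Or.inl trivial⟩

lemma joinGraph_adj_rl {V W : Type} (G : SimpleGraph V) (H : SimpleGraph W) (a : W) (b : V) :
    (joinGraph G H).Adj (.inr a) (.inl b) := ⟨by simp, Or.inl trivial⟩

/-- The quad splitting as a graph isomorphism. -/
def quadIso (d : ℕ) :
    sumGraph (joinGraph (Gd d) (Gd d)) (joinGraph (Gd d) (Gd d)) ≃g Gd (d+1) where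
  toEquiv := quadEquiv d
  map_rel_iff' := by
    rintro ((a | a) | (a | a)) ((b | b) | (b | b)) <;>
      simp +decide [quadEquiv, gd_adj_cons, sumGraph_adj_ll, sumGraph_adj_rr,
        sumGraph_adj_lr, sumGraph_adj_rl, joinGraph_adj_ll, joinGraph_adj_rr,
        joinGraph_adj_lr, joinGraph_adj_rl]

lemma isCograph_Gd (d : ℕ) : IsCograph (Gd d) := by
  induction d with
  | zero =>
    refine IsCograph.iso (G := (⊥ : SimpleGraph PUnit)) ?_ IsCograph.single
    refine ⟨Equiv.ofUnique PUnit (Fin 0 → Sq), ?_⟩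
    intro a b
    constructor
    · rintro (⟨t, _⟩ | ⟨t, _⟩) <;> exact t.elim0
    · rintro h; simp at h
  | succ d ih =>
    exact IsCograph.iso (quadIso d) (IsCograph.coprod (IsCograph.join ih ih) (IsCograph.join ih ih))

end GraphAdj

section Embed

/-- A good embedding of `G` into the up-1-comb graph on `(2²)^d`. -/
def GoodEmb {V : Type} (G : SimpleGraph V) (d : ℕ) : Prop :=
  ∃ f : V → (Fin d → Sq),
    (∀ v w, G.Adj v w → Below (f v) (f w) ∨ Below (f w) (f v)) ∧
    (∀ V₀ : Set V, V₀.Nonempty → (∀ v ∈ V₀, ∀ w ∈ V₀, ¬ G.Adj v w) →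
      FinRightComb (f '' V₀))

lemma GoodEmb.cons {V : Type} {G : SimpleGraph V} {d : ℕ} (u : Sq) (h : GoodEmb G d) :
    GoodEmb G (d + 1) := by
  obtain ⟨f, ha, hb⟩ := h
  refine ⟨fun v => Fin.cons u (f v), ?_, ?_⟩
  · intro v w hadj
    rcases ha v w hadj with h | h
    · exact Or.inl ((below_cons_iff u u _ _).mpr (Or.inr ⟨rfl, h⟩))
    · exact Or.inr ((below_cons_iff u u _ _).mpr (Or.inr ⟨rfl, h⟩))
  · intro V₀ hne hanti
    have : (fun v => Fin.cons u (f v)) '' V₀ =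
        (Fin.cons (α := fun _ => Sq) u) '' (f '' V₀) := by
      rw [← Set.image_comp]; rfl
    rw [this]
    exact finRightComb_image_cons u (hb V₀ hne hanti)

lemma GoodEmb.mono {V : Type} {G : SimpleGraph V} {d d' : ℕ} (hd : d ≤ d')
    (h : GoodEmb G d) : GoodEmb G d' := by
  induction hd with
  | refl => exact h
  | step _ ih => exact ih.cons (0, 0)

lemma goodEmb_of_isCograph {V : Type} {G : SimpleGraph V} (h : IsCograph G) :
    ∃ d, GoodEmb G d := by
  induction h with
  | single =>
    refine ⟨0, fun _ => Fin.elim0, ?_, ?_⟩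
    · intro v w hadj; simp at hadj
    · intro V₀ hne _
      rw [hne.image_const]
      exact .single _
  | @iso V W G H e _ ih =>
    obtain ⟨d, f, ha, hb⟩ := ih
    refine ⟨d, fun w => f (e.symm w), ?_, ?_⟩
    · intro v w hadj
      exact ha _ _ (e.symm.map_rel_iff.mpr hadj)
    · intro V₀ hne hanti
      have : (fun w => f (e.symm w)) '' V₀ = f '' (e.symm '' V₀) := by
        rw [← Set.image_comp]; rfl
      rw [this]
      refine hb _ (hne.image _) ?_
      rintro _ ⟨v, hv, rfl⟩ _ ⟨w, hw, rfl⟩ hadj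
      exact hanti v hv w hw (e.symm.map_rel_iff.mp hadj)
  | @coprod V W G H _ _ ih₁ ih₂ =>
    obtain ⟨d₁, hg₁⟩ := ih₁
    obtain ⟨d₂, hg₂⟩ := ih₂
    obtain ⟨f₁, ha₁, hb₁⟩ := hg₁.mono (le_max_left d₁ d₂)
    obtain ⟨f₂, ha₂, hb₂⟩ := hg₂.mono (le_max_right d₁ d₂)
    refine ⟨max d₁ d₂ + 1, Sum.elim (fun v => Fin.cons (0, 0) (f₁ v))
      (fun w => Fin.cons (1, 0) (f₂ w)), ?_, ?_⟩
    · rintro (v | v) (w | w) hadj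
      · rcases ha₁ v w ((sumGraph_adj_ll G H v w).mp hadj) with h | h
        · exact Or.inl ((below_cons_iff _ _ _ _).mpr (Or.inr ⟨rfl, h⟩))
        · exact Or.inr ((below_cons_iff _ _ _ _).mpr (Or.inr ⟨rfl, h⟩))
      · exact absurd hadj (sumGraph_adj_lr G H v w)
      · exact absurd hadj (sumGraph_adj_rl G H v w)
      · rcases ha₂ v w ((sumGraph_adj_rr G H v w).mp hadj) with h | h
        · exact Or.inl ((below_cons_iff _ _ _ _).mpr (Or.inr ⟨rfl, h⟩))
        · exact Or.inr ((below_cons_iff _ _ _ _).mpr (Or.inr ⟨rfl, h⟩))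
    · intro V₀ hne hanti
      set S : Set V := Sum.inl ⁻¹' V₀ with hS
      set T : Set W := Sum.inr ⁻¹' V₀ with hT
      have himg : (Sum.elim (fun v => Fin.cons (0, 0) (f₁ v))
          (fun w => Fin.cons (1, 0) (f₂ w))) '' V₀ =
          (Fin.cons (α := fun _ : Fin (max d₁ d₂ + 1) => Sq) ((0 : Fin 2), (0 : Fin 2))) '' (f₁ '' S) ∪
            (Fin.cons (α := fun _ : Fin (max d₁ d₂ + 1) => Sq) ((1 : Fin 2), (0 : Fin 2))) '' (f₂ '' T) := by
        ext x
        constructor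
        · rintro ⟨(v | w), hv, rfl⟩
          · exact Or.inl ⟨f₁ v, ⟨v, hv, rfl⟩, rfl⟩
          · exact Or.inr ⟨f₂ w, ⟨w, hv, rfl⟩, rfl⟩
        · rintro (⟨_, ⟨v, hv, rfl⟩, rfl⟩ | ⟨_, ⟨w, hw, rfl⟩, rfl⟩)
          · exact ⟨Sum.inl v, hv, rfl⟩
          · exact ⟨Sum.inr w, hw, rfl⟩
      have hSanti : ∀ v ∈ S, ∀ w ∈ S, ¬ G.Adj v w := fun v hv w hw h =>
        hanti _ hv _ hw ((sumGraph_adj_ll G H v w).mpr h)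
      have hTanti : ∀ v ∈ T, ∀ w ∈ T, ¬ H.Adj v w := fun v hv w hw h =>
        hanti _ hv _ hw ((sumGraph_adj_rr G H v w).mpr h)
      rw [himg]
      rcases S.eq_empty_or_nonempty with hSe | hSne <;>
        rcases T.eq_empty_or_nonempty with hTe | hTne
      · exfalso
        obtain ⟨x, hx⟩ := hne
        rcases x with v | w
        · exact absurd (show v ∈ S from hx) (by rw [hSe]; exact Set.notMem_empty v)
        · exact absurd (show w ∈ T from hx) (by rw [hTe]; exact Set.notMem_empty w)
      · rw [hSe]
        simp only [Set.image_empty, Set.empty_union]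
        exact finRightComb_image_cons _ (hb₂ T hTne hTanti)
      · rw [hTe]
        simp only [Set.image_empty, Set.union_empty]
        exact finRightComb_image_cons _ (hb₁ S hSne hSanti)
      · exact .union (finRightComb_image_cons _ (hb₁ S hSne hSanti))
          (finRightComb_image_cons _ (hb₂ T hTne hTanti))
          (narrowlyLeft_cons_cross 0 _ _)
  | @join V W G H _ _ ih₁ ih₂ =>
    obtain ⟨d₁, hg₁⟩ := ih₁
    obtain ⟨d₂, hg₂⟩ := ih₂
    obtain ⟨f₁, ha₁, hb₁⟩ := hg₁.mono (le_max_left d₁ d₂)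
    obtain ⟨f₂, ha₂, hb₂⟩ := hg₂.mono (le_max_right d₁ d₂)
    refine ⟨max d₁ d₂ + 1, Sum.elim (fun v => Fin.cons (0, 0) (f₁ v))
      (fun w => Fin.cons (0, 1) (f₂ w)), ?_, ?_⟩
    · rintro (v | v) (w | w) hadj
      · rcases ha₁ v w ((joinGraph_adj_ll G H v w).mp hadj) with h | h
        · exact Or.inl ((below_cons_iff _ _ _ _).mpr (Or.inr ⟨rfl, h⟩))
        · exact Or.inr ((below_cons_iff _ _ _ _).mpr (Or.inr ⟨rfl, h⟩))
      · exact Or.inl ((below_cons_iff _ _ _ _).mpr (Or.inl ⟨0, rfl, rfl⟩))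
      · exact Or.inr ((below_cons_iff _ _ _ _).mpr (Or.inl ⟨0, rfl, rfl⟩))
      · rcases ha₂ v w ((joinGraph_adj_rr G H v w).mp hadj) with h | h
        · exact Or.inl ((below_cons_iff _ _ _ _).mpr (Or.inr ⟨rfl, h⟩))
        · exact Or.inr ((below_cons_iff _ _ _ _).mpr (Or.inr ⟨rfl, h⟩))
    · intro V₀ hne hanti
      have hside : (∀ x ∈ V₀, ∃ v, x = Sum.inl v) ∨ (∀ x ∈ V₀, ∃ w, x = Sum.inr w) := by
        by_contra hcon
        push_neg at hcon
        obtain ⟨⟨x, hx, hxl⟩, ⟨y, hy, hyr⟩⟩ := hcon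
        rcases x with v | w
        · exact hxl v rfl
        · rcases y with v' | w'
          · exact hanti _ hy _ hx (joinGraph_adj_lr G H v' w)
          · exact hyr w' rfl
      rcases hside with hside | hside
      · set S : Set V := Sum.inl ⁻¹' V₀
        have himg : (Sum.elim (fun v => Fin.cons (0, 0) (f₁ v))
            (fun w => Fin.cons (0, 1) (f₂ w))) '' V₀ =
            (Fin.cons (α := fun _ : Fin (max d₁ d₂ + 1) => Sq) ((0 : Fin 2), (0 : Fin 2))) '' (f₁ '' S) := by
          ext x
          constructor
          · rintro ⟨z, hz, rfl⟩
            obtain ⟨v, rfl⟩ := hside z hz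
            exact ⟨f₁ v, ⟨v, hz, rfl⟩, rfl⟩
          · rintro ⟨_, ⟨v, hv, rfl⟩, rfl⟩
            exact ⟨Sum.inl v, hv, rfl⟩
        rw [himg]
        have hSne : S.Nonempty := by
          obtain ⟨x, hx⟩ := hne
          obtain ⟨v, rfl⟩ := hside x hx
          exact ⟨v, hx⟩
        refine finRightComb_image_cons _ (hb₁ S hSne fun v hv w hw h => ?_)
        exact hanti _ hv _ hw ((joinGraph_adj_ll G H v w).mpr h)
      · set T : Set W := Sum.inr ⁻¹' V₀
        have himg : (Sum.elim (fun v => Fin.cons (0, 0) (f₁ v))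
            (fun w => Fin.cons (0, 1) (f₂ w))) '' V₀ =
            (Fin.cons (α := fun _ : Fin (max d₁ d₂ + 1) => Sq) ((0 : Fin 2), (1 : Fin 2))) '' (f₂ '' T) := by
          ext x
          constructor
          · rintro ⟨z, hz, rfl⟩
            obtain ⟨w, rfl⟩ := hside z hz
            exact ⟨f₂ w, ⟨w, hz, rfl⟩, rfl⟩
          · rintro ⟨_, ⟨w, hw, rfl⟩, rfl⟩
            exact ⟨Sum.inr w, hw, rfl⟩
        rw [himg]
        have hTne : T.Nonempty := by
          obtain ⟨x, hx⟩ := hne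
          obtain ⟨w, rfl⟩ := hside x hx
          exact ⟨w, hx⟩
        refine finRightComb_image_cons _ (hb₂ T hTne fun v hv w hw h => ?_)
        exact hanti _ hv _ hw ((joinGraph_adj_rr G H v w).mpr h)

end Embed

/-- A structure `M` admits arbitrary cograph consistency-inconsistency patterns for
`φ(x,y)` if and only if it has `(2,ω,ω)`-weaves for `φ(x,y)` of every finite depth
(up-ω-combs `2`-inconsistent, right-ω-combs consistent). -/
theorem stmt_18 {L : FirstOrder.Language.{u, v}} {M : Type w} [L.Structure M]
    (φ : L.Formula (Fin 2)) :
    (∀ (V : Type) (G : SimpleGraph V), IsCograph G →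
      ∃ b : V → M, ∀ V₀ : Set V,
        ((∃ x : M, ∀ v ∈ V₀, φ.Realize ![x, b v]) ↔
          ∀ v ∈ V₀, ∀ w ∈ V₀, ¬ G.Adj v w)) ↔
    (∀ d : ℕ, ∃ b : (Fin d → Sq) → M,
      (∀ C : Set (Fin d → Sq), FinUpComb C →
        ∀ σ ∈ C, ∀ τ ∈ C, σ ≠ τ →
          ¬ ∃ x : M, φ.Realize ![x, b σ] ∧ φ.Realize ![x, b τ]) ∧
      (∀ C : Set (Fin d → Sq), FinRightComb C →
        ∃ x : M, ∀ σ ∈ C, φ.Realize ![x, b σ])) := by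
  constructor
  · intro H d
    obtain ⟨b, hb⟩ := H _ (Gd d) (isCograph_Gd d)
    refine ⟨b, ?_, ?_⟩
    · rintro C hC σ hσ τ hτ hne ⟨x, hx1, hx2⟩
      have hadj : (Gd d).Adj σ τ := finUpComb_adj hC σ hσ τ hτ hne
      have hmem : ∀ v ∈ ({σ, τ} : Set (Fin d → Sq)), φ.Realize ![x, b v] := by
        intro v hv
        rcases hv with rfl | hv
        · exact hx1
        · rw [Set.mem_singleton_iff] at hv
          subst hv
          exact hx2
      exact (hb {σ, τ}).mp ⟨x, hmem⟩ σ (by simp) τ (by simp) hadj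
    · intro C hC
      refine (hb C).mpr ?_
      intro σ hσ τ hτ hadj
      rcases hadj with h | h
      · exact finRightComb_not_below hC σ hσ τ hτ h
      · exact finRightComb_not_below hC τ hτ σ hσ h
  · intro H V G hG
    obtain ⟨d, f, hfa, hfb⟩ := goodEmb_of_isCograph hG
    obtain ⟨b, hb1, hb2⟩ := H d
    refine ⟨fun v => b (f v), ?_⟩
    intro V₀
    constructor
    · rintro ⟨x, hx⟩ v hv w hw hadj
      rcases hfa v w hadj with h | h
      · have hcomb : FinUpComb ({f v} ∪ {f w}) :=
          .union (.single _) (.single _) (narrowlyBelow_of_below h)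
        exact hb1 _ hcomb (f v) (by simp) (f w) (by simp) (below_ne h)
          ⟨x, hx v hv, hx w hw⟩
      · have hcomb : FinUpComb ({f w} ∪ {f v}) :=
          .union (.single _) (.single _) (narrowlyBelow_of_below h)
        exact hb1 _ hcomb (f w) (by simp) (f v) (by simp) (below_ne h)
          ⟨x, hx w hw, hx v hv⟩
    · intro hanti
      rcases V₀.eq_empty_or_nonempty with rfl | hne
      · obtain ⟨x, -⟩ := hb2 {fun _ => (0, 0)} (.single _)
        exact ⟨x, by simp⟩
      · obtain ⟨x, hx⟩ := hb2 _ (hfb V₀ hne hanti)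
        exact ⟨x, fun v hv => hx (f v) ⟨v, hv, rfl⟩⟩
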